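/- In a finite tree, all longest simple paths have the same set of central vertices; that is, if v_1,…,v_n and w_1,…,w_m are two longest simple paths (so n = m), then {v_i : i ∈ {⌈(n+1)/2⌉, ⌊(n+1)/2⌋}} = {w_i : i ∈ {⌈(n+1)/2⌉, ⌊(n+1)/2⌋}}. Consequently, a finite tree has at most two central vertices. -/

import Mathlib

/-- The central vertices of a simple path `v_1, …, v_n` (1-indexed) are the vertices
`v_i` with `i ∈ {⌈(n+1)/2⌉, ⌊(n+1)/2⌋}`.  Here `n = p.support.length`, and in `ℕ` we
have `⌈(n+1)/2⌉ = (n+2)/2` and `⌊(n+1)/2⌋ = (n+1)/2`. -/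
def centralVertices {V : Type} {G : SimpleGraph V} {a b : V} (p : G.Walk a b) : Set V :=
  { v | ∃ i : ℕ,
      (i = (p.support.length + 2) / 2 ∨ i = (p.support.length + 1) / 2) ∧
      ∃ h : i - 1 < p.support.length, p.support.get ⟨i - 1, h⟩ = v }

/-- A longest simple path: a path of maximum length (number of vertices) among all
simple paths of the graph. -/
def IsLongestPath {V : Type} (G : SimpleGraph V) {a b : V} (p : G.Walk a b) : Prop :=
  p.IsPath ∧ ∀ (x y : V) (q : G.Walk x y), q.IsPath → q.support.length ≤ p.support.length

/-- A vertex is central in the graph if it is central in some longest simple path. -/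
def IsCentral {V : Type} (G : SimpleGraph V) (v : V) : Prop :=
  ∃ (a b : V) (p : G.Walk a b), IsLongestPath G p ∧ v ∈ centralVertices p

namespace TreeCenterAux

open SimpleGraph Walk

variable {V : Type} {G : SimpleGraph V}

lemma support_get_eq_getVert {a b : V} (p : G.Walk a b) (i : ℕ)
    (h : i < p.support.length) : p.support.get ⟨i, h⟩ = p.getVert i := by
  induction p generalizing i with
  | nil =>
    simp only [Walk.support_nil, List.length_singleton] at h
    interval_cases i
    rfl
  | cons ha q ih =>
    cases i with
    | zero => simp [Walk.support_cons, Walk.getVert_zero]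
    | succ i =>
      simp only [Walk.support_cons, List.get_cons_succ, Walk.getVert_cons_succ]
      exact ih _ _

lemma tree_path_length (hG : G.IsTree) {a b : V} (p : G.Walk a b) (hp : p.IsPath) :
    p.length = G.dist a b := by
  obtain ⟨q, hq, hlen⟩ := hG.isConnected.exists_path_of_dist a b
  have h : (⟨p, hp⟩ : G.Path a b) = ⟨q, hq⟩ := hG.IsAcyclic.path_unique _ _
  rw [show p = q from congrArg Subtype.val h, hlen]

lemma append_path {x y z : V} {p1 : G.Walk x y} {p2 : G.Walk y z}
    (h1 : p1.IsPath) (h2 : p2.IsPath)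
    (h : ∀ u ∈ p1.support, u ∈ p2.support → u = y) : (p1.append p2).IsPath := by
  rw [Walk.isPath_def, Walk.support_append]
  have hcons : p2.support = y :: p2.support.tail := p2.support_eq_cons
  have h2' : p2.support.Nodup := h2.support_nodup
  rw [hcons] at h2'
  refine List.Nodup.append h1.support_nodup h2'.of_cons ?_
  intro u hu hu'
  have : u ∈ p2.support := by rw [hcons]; exact List.mem_cons_of_mem _ hu'
  have := h u hu this
  subst this
  exact (List.nodup_cons.mp h2').1 hu'

lemma first_hit {x b : V} (p : G.Walk x b) {c a' : V} (q : G.Walk c a') :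
    q.IsPath → a' ∈ p.support →
    ∃ w, ∃ _ : w ∈ p.support, ∃ r : G.Walk c w, r.IsPath ∧
      r.support ⊆ q.support ∧ ∀ y ∈ r.support, y ∈ p.support → y = w := by
  classical
  induction q with
  | nil =>
    intro _ ha
    exact ⟨_, ha, Walk.nil, Walk.IsPath.nil, by simp, fun y hy _ => by simpa using hy⟩
  | @cons u u' a'' hadj q ih =>
    intro hq ha
    by_cases hc : u ∈ p.support
    · exact ⟨u, hc, Walk.nil, Walk.IsPath.nil, by simp, fun y hy _ => by simpa using hy⟩
    · obtain ⟨w, hw, r, hr, hrsub, hrmeet⟩ := ih hq.of_cons ha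
      refine ⟨w, hw, Walk.cons hadj r, ?_, ?_, ?_⟩
      · refine hr.cons ?_
        intro hmem
        exact ((Walk.cons_isPath_iff _ _).mp hq).2 (hrsub hmem)
      · rw [Walk.support_cons, Walk.support_cons]
        intro y hy
        rcases List.mem_cons.mp hy with h' | hy
        · exact h' ▸ List.mem_cons_self
        · exact List.mem_cons_of_mem _ (hrsub hy)
      · intro y hy hyp
        rw [Walk.support_cons] at hy
        rcases List.mem_cons.mp hy with rfl | hy
        · exact absurd hyp hc
        · exact hrmeet y hy hyp

lemma exists_median (hG : G.IsTree) (a b c : V) :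
    ∃ w, G.dist a w + G.dist w b = G.dist a b ∧
      G.dist c w + G.dist w a = G.dist c a ∧
      G.dist c w + G.dist w b = G.dist c b := by
  classical
  obtain ⟨p, hp, -⟩ := hG.isConnected.exists_path_of_dist a b
  obtain ⟨q, hq, -⟩ := hG.isConnected.exists_path_of_dist c a
  obtain ⟨w, hw, r, hr, hrsub, hrmeet⟩ := first_hit p q hq p.start_mem_support
  set t := p.takeUntil w hw with ht
  set s := p.dropUntil w hw with hs
  have hts : t.append s = p := p.take_spec hw
  have htp : t.IsPath := hp.takeUntil hw
  have hsp : s.IsPath := hp.dropUntil hw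
  have hlen : t.length + s.length = p.length := by
    rw [← hts, Walk.length_append]
  refine ⟨w, ?_, ?_, ?_⟩
  · rw [← tree_path_length hG t htp, ← tree_path_length hG s hsp,
      ← tree_path_length hG p hp, hlen]
  · have h2 : (r.append t.reverse).IsPath := by
      refine append_path hr htp.reverse ?_
      intro u hu hu'
      refine hrmeet u hu ?_
      rw [Walk.support_reverse] at hu'
      exact p.support_takeUntil_subset hw (List.mem_reverse.mp hu')
    have e1 : r.length = G.dist c w := tree_path_length hG r hr
    have e2 : t.reverse.length = G.dist w a := tree_path_length hG _ htp.reverse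
    have e3 : (r.append t.reverse).length = G.dist c a := tree_path_length hG _ h2
    rw [Walk.length_append] at e3
    rw [← e1, ← e2]
    exact e3
  · have h2 : (r.append s).IsPath := by
      refine append_path hr hsp ?_
      intro u hu hu'
      exact hrmeet u hu (p.support_dropUntil_subset hw hu')
    have e1 : r.length = G.dist c w := tree_path_length hG r hr
    have e2 : s.length = G.dist w b := tree_path_length hG _ hsp
    have e3 : (r.append s).length = G.dist c b := tree_path_length hG _ h2
    rw [Walk.length_append] at e3
    rw [← e1, ← e2]
    exact e3

lemma suffix_dist (hG : G.IsTree) {a b : V} (p : G.Walk a b) (hp : p.IsPath) :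
    ∀ k, k ≤ p.length → G.dist (p.getVert k) b = p.length - k := by
  induction p with
  | nil =>
    intro k hk
    simp only [Walk.length_nil, Nat.le_zero] at hk
    subst hk; simp
  | @cons u u' w hadj q ih =>
    intro k hk
    cases k with
    | zero =>
      simp only [Walk.getVert_zero, Nat.sub_zero]
      exact (tree_path_length hG _ hp).symm
    | succ k =>
      rw [Walk.getVert_cons_succ]
      have := ih hp.of_cons k (by simpa [Nat.succ_le_succ_iff] using hk)
      simpa [Walk.length_cons] using this

lemma prefix_dist (hG : G.IsTree) {a b : V} (p : G.Walk a b) (hp : p.IsPath)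
    (k : ℕ) (hk : k ≤ p.length) : G.dist a (p.getVert k) = k := by
  have h := suffix_dist hG p.reverse hp.reverse (p.length - k)
    (by rw [Walk.length_reverse]; omega)
  rw [Walk.getVert_reverse, Walk.length_reverse] at h
  rw [show p.length - (p.length - k) = k by omega] at h
  rw [SimpleGraph.dist_comm, h]

lemma pair_dist (hG : G.IsTree) {a b : V} (p : G.Walk a b) (hp : p.IsPath) :
    ∀ j k, j ≤ k → k ≤ p.length → G.dist (p.getVert j) (p.getVert k) = k - j := by
  induction p with
  | nil =>
    intro j k hjk hk
    simp only [Walk.length_nil, Nat.le_zero] at hk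
    have : j = 0 := by omega
    subst hk; subst this; simp
  | @cons u u' w hadj q ih =>
    intro j k hjk hk
    cases j with
    | zero =>
      rw [Walk.getVert_zero, Nat.sub_zero]
      exact prefix_dist hG _ hp k hk
    | succ j =>
      cases k with
      | zero => omega
      | succ k =>
        rw [Walk.getVert_cons_succ, Walk.getVert_cons_succ]
        have := ih hp.of_cons j k (by omega) (by simpa [Nat.succ_le_succ_iff] using hk)
        simpa using this

lemma getVert_of_dist (hG : G.IsTree) {a b v : V} (p : G.Walk a b) (hp : p.IsPath)
    (h : G.dist a v + G.dist v b = G.dist a b) : p.getVert (G.dist a v) = v := by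
  obtain ⟨r1, hr1, hl1⟩ := hG.isConnected.exists_path_of_dist a v
  obtain ⟨r2, hr2, hl2⟩ := hG.isConnected.exists_path_of_dist v b
  have hlen : (r1.append r2).length = G.dist a b := by
    rw [Walk.length_append, hl1, hl2, h]
  have hpath : (r1.append r2).IsPath := Walk.isPath_of_length_eq_dist _ hlen
  have heq : (⟨p, hp⟩ : G.Path a b) = ⟨r1.append r2, hpath⟩ := hG.IsAcyclic.path_unique _ _
  have hpe : p = r1.append r2 := congrArg Subtype.val heq
  rw [hpe, Walk.getVert_append, ← hl1]
  simp [Walk.getVert_length]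

lemma central_eq (hG : G.IsTree) {a b : V} (p : G.Walk a b)
    (hp : IsLongestPath G p) (hmax : ∀ x y : V, G.dist x y ≤ p.length) :
    centralVertices p = {v | ∀ u, G.dist v u ≤ (p.length + 1) / 2} := by
  obtain ⟨hpath, -⟩ := hp
  set L := p.length with hL
  have hsup : p.support.length = L + 1 := p.length_support
  have hD : G.dist a b = L := (tree_path_length hG p hpath).symm
  ext v
  simp only [centralVertices, Set.mem_setOf_eq]
  constructor
  · rintro ⟨i, hi, h, rfl⟩
    rw [hsup] at hi
    rw [support_get_eq_getVert]
    intro u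
    set k := i - 1 with hk
    have hkcase : k = L / 2 ∨ k = (L + 1) / 2 := by omega
    have hkL : k ≤ L := by omega
    obtain ⟨w, hw1, hw2, hw3⟩ := exists_median hG a b u
    rw [hD] at hw1
    set j := G.dist a w with hj
    have hjL : j ≤ L := by omega
    have hwv : p.getVert j = w := getVert_of_dist hG p hpath (by rw [hD]; exact hw1)
    have hdwv : (G.dist w (p.getVert k) = k - j ∧ j ≤ k) ∨
        (G.dist w (p.getVert k) = j - k ∧ k ≤ j) := by
      rcases le_or_gt j k with hle | hlt
      · left
        exact ⟨by rw [← hwv]; exact pair_dist hG p hpath j k hle hkL, hle⟩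
      · right
        refine ⟨?_, hlt.le⟩
        rw [← hwv, SimpleGraph.dist_comm]
        exact pair_dist hG p hpath k j hlt.le hjL
    have htri : G.dist (p.getVert k) u ≤ G.dist (p.getVert k) w + G.dist w u :=
      hG.isConnected.dist_triangle
    have hvw : G.dist (p.getVert k) w = G.dist w (p.getVert k) := SimpleGraph.dist_comm ..
    have hwu : G.dist w u = G.dist u w := SimpleGraph.dist_comm ..
    have hwa : G.dist w a = j := by rw [SimpleGraph.dist_comm]
    have hua : G.dist u a ≤ L := hmax u a
    have hub : G.dist u b ≤ L := hmax u b
    omega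
  · intro hv
    have h1 : G.dist a v ≤ (L + 1) / 2 := by
      rw [SimpleGraph.dist_comm]; exact hv a
    have h2 : G.dist v b ≤ (L + 1) / 2 := hv b
    obtain ⟨w, hw1, hw2, hw3⟩ := exists_median hG a b v
    rw [hD] at hw1
    have hwa : G.dist w a = G.dist a w := SimpleGraph.dist_comm ..
    have hwv0 : G.dist v w = 0 := by
      have hva : G.dist v a = G.dist a v := SimpleGraph.dist_comm ..
      omega
    have hvw : v = w := (hG.isConnected.dist_eq_zero_iff).mp hwv0
    subst hvw
    have hsum : G.dist a v + G.dist v b = G.dist a b := by rw [hD]; omega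
    set k := G.dist a v with hk
    have hkL : k ≤ L := by omega
    have hgv : p.getVert k = v := getVert_of_dist hG p hpath hsum
    refine ⟨k + 1, by rw [hsup]; omega, by rw [hsup]; omega, ?_⟩
    rw [support_get_eq_getVert]
    simpa using hgv

end TreeCenterAux

/-- In a finite tree, all longest simple paths have the same set of central vertices;
consequently, a finite tree has at most two central vertices. -/
theorem central_vertices_unique_and_at_most_two {V : Type} [Fintype V] (G : SimpleGraph V)
    (hG : G.IsTree) :
    (∀ {a b c d : V} (p : G.Walk a b) (q : G.Walk c d),
        IsLongestPath G p → IsLongestPath G q → centralVertices p = centralVertices q) ∧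
    {v : V | IsCentral G v}.ncard ≤ 2 := by
  classical
  open TreeCenterAux SimpleGraph Walk in
  have hmaxd : ∀ {a b : V} (p : G.Walk a b), IsLongestPath G p →
      ∀ x y : V, G.dist x y ≤ p.length := by
    intro a b p hp x y
    obtain ⟨r, hr, hl⟩ := hG.isConnected.exists_path_of_dist x y
    have := hp.2 x y r hr
    rw [r.length_support, p.length_support] at this
    omega
  have part1 : ∀ {a b c d : V} (p : G.Walk a b) (q : G.Walk c d),
      IsLongestPath G p → IsLongestPath G q → centralVertices p = centralVertices q := by
    intro a b c d p q hp hq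
    have hlen : p.length = q.length := by
      have h1 := hp.2 c d q hq.1
      have h2 := hq.2 a b p hp.1
      rw [p.length_support, q.length_support] at h1 h2
      omega
    rw [TreeCenterAux.central_eq hG p hp (hmaxd p hp),
      TreeCenterAux.central_eq hG q hq (hmaxd q hq), hlen]
  refine ⟨part1, ?_⟩
  -- existence of a longest path
  have hne : Nonempty V := hG.isConnected.nonempty
  obtain ⟨v0⟩ := hne
  set P : ℕ → Prop := fun n => ∃ (x y : V) (r : G.Walk x y), r.IsPath ∧ r.support.length = n
    with hPdef
  have hP1 : P 1 := ⟨v0, v0, SimpleGraph.Walk.nil, SimpleGraph.Walk.IsPath.nil, by simp⟩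
  have hcard : 1 ≤ Fintype.card V := Fintype.card_pos_iff.mpr ⟨v0⟩
  have hPN : P (Nat.findGreatest P (Fintype.card V)) := by
    refine Nat.findGreatest_spec hcard hP1
  obtain ⟨x0, y0, p0, hp0, hlen0⟩ := hPN
  have hlongest : IsLongestPath G p0 := by
    refine ⟨hp0, ?_⟩
    intro x y q hq
    rw [hlen0]
    refine Nat.le_findGreatest ?_ ⟨x, y, q, hq, rfl⟩
    have : q.support.Nodup := hq.support_nodup
    exact this.length_le_card
  have hset : {v : V | IsCentral G v} = centralVertices p0 := by
    ext v
    constructor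
    · rintro ⟨a, b, p, hp, hv⟩
      rwa [part1 p p0 hp hlongest] at hv
    · intro hv
      exact ⟨x0, y0, p0, hlongest, hv⟩
  rw [hset]
  set n := p0.support.length with hn
  have hsub : centralVertices p0 ⊆
      {p0.getVert ((n + 2) / 2 - 1), p0.getVert ((n + 1) / 2 - 1)} := by
    rintro v ⟨i, hi, h, rfl⟩
    rw [TreeCenterAux.support_get_eq_getVert]
    rcases hi with rfl | rfl
    · left; rfl
    · right; rfl
  calc (centralVertices p0).ncard
      ≤ ({p0.getVert ((n + 2) / 2 - 1), p0.getVert ((n + 1) / 2 - 1)} : Set V).ncard :=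
        Set.ncard_le_ncard hsub (Set.toFinite _)
    _ ≤ 2 := by
        refine le_trans (Set.ncard_insert_le _ _) ?_
        simp [Set.ncard_singleton]
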